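/- Let W_λ be a unilateral weighted shift in ℓ²(ℕ) that is C-symmetric with respect to a conjugation C satisfying C eₙ ∈ dom(W_λ) for all n, and let W_λ = U|W_λ| be its polar decomposition. Then there exists an antilinear partial conjugation J such that U = CJ and J|W_λ| = |W_λ|J. -/

import Mathlib

open scoped InnerProductSpace ComplexConjugate



open InnerProductSpace in
/-- A conjugation on a complex inner product space: an antilinear involution
satisfying `⟪Cf, Cg⟫ = ⟪g, f⟫`. -/
structure Conjugation (H : Type*) [NormedAddCommGroup H] [InnerProductSpace ℂ H] where
  toFun : H → H
  map_add' : ∀ x y, toFun (x + y) = toFun x + toFun y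
  map_smul' : ∀ (c : ℂ) (x : H), toFun (c • x) = (starRingEnd ℂ c) • toFun x
  invol : ∀ x, toFun (toFun x) = x
  inner_map : ∀ x y, (inner ℂ (toFun x) (toFun y) : ℂ) = inner ℂ y x

/-- `T` is `C`-symmetric: `T ⊆ C T* C`. -/
noncomputable def CSymmetric {H : Type*} [NormedAddCommGroup H] [InnerProductSpace ℂ H]
    [CompleteSpace H] (C : Conjugation H) (T : H →ₗ.[ℂ] H) : Prop :=
  ∀ x : T.domain, ∃ hx : C.toFun x ∈ T.adjoint.domain,
    C.toFun (T.adjoint ⟨C.toFun x, hx⟩) = T x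

/-- `T` is `C`-selfadjoint: `T = C T* C`. -/
noncomputable def CSelfAdjoint {H : Type*} [NormedAddCommGroup H] [InnerProductSpace ℂ H]
    [CompleteSpace H] (C : Conjugation H) (T : H →ₗ.[ℂ] H) : Prop :=
  CSymmetric C T ∧ ∀ y : H, C.toFun y ∈ T.adjoint.domain → y ∈ T.domain

/-- Composition of partially defined linear maps, with its natural (maximal) domain. -/
noncomputable def LinearPMap.pcomp {R E F G : Type*} [Ring R] [AddCommGroup E] [Module R E]
    [AddCommGroup F] [Module R F] [AddCommGroup G] [Module R G]
    (g : F →ₗ.[R] G) (f : E →ₗ.[R] F) : E →ₗ.[R] G :=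
  g.comp (f.domRestrict ((g.domain.comap f.toFun).map f.domain.subtype))
    (by
      rintro ⟨x, hx1, hx2⟩
      obtain ⟨y, hy, hyx⟩ := hx1
      subst hyx
      erw [LinearPMap.domRestrict_apply (y := y) rfl]; exact hy)

/-- Natural powers of a partially defined linear map, `T^(n+1) = T ∘ T^n`, with
`T^0` the identity on the whole space. -/
noncomputable def LinearPMap.ppow {R E : Type*} [Ring R] [AddCommGroup E] [Module R E]
    (T : E →ₗ.[R] E) : ℕ → E →ₗ.[R] E
  | 0 => ⟨⊤, (⊤ : Submodule R E).subtype⟩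
  | n + 1 => T.pcomp (T.ppow n)

/-- `W` is the unilateral weighted shift in `ℓ²(ℕ)` with weights `lam` (0-indexed:
`W eₙ = lam n • e_{n+1}`): it has the maximal domain
`{f : Σ |lam n * f n|² < ∞}` and acts by `(W f)(n+1) = lam n * f n`, `(W f)(0) = 0`. -/
def IsWeightedShift (lam : ℕ → ℂ) (W : lp (fun _ : ℕ => ℂ) 2 →ₗ.[ℂ] lp (fun _ : ℕ => ℂ) 2) :
    Prop :=
  (∀ f : lp (fun _ : ℕ => ℂ) 2, f ∈ W.domain ↔ Memℓp (fun n => lam n * f n) 2) ∧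
  (∀ f : W.domain, (W f : lp (fun _ : ℕ => ℂ) 2) 0 = 0 ∧
    ∀ n : ℕ, (W f : lp (fun _ : ℕ => ℂ) 2) (n + 1) = lam n * (f : lp (fun _ : ℕ => ℂ) 2) n)

/-- The canonical orthonormal basis of `ℓ²(ℕ)` (0-indexed). -/
noncomputable def e (n : ℕ) : lp (fun _ : ℕ => ℂ) 2 := lp.single 2 n 1



local notation "ℋ" => lp (fun _ : ℕ => ℂ) 2

namespace Conjugation
variable {E : Type*} [NormedAddCommGroup E] [InnerProductSpace ℂ E] (C : Conjugation E)

/-- C as a conjugate-linear map. -/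
noncomputable def toSL : E →ₛₗ[starRingEnd ℂ] E :=
  { toFun := C.toFun, map_add' := C.map_add', map_smul' := C.map_smul' }

@[simp] lemma toSL_apply (x : E) : C.toSL x = C.toFun x := rfl

lemma map_zero : C.toFun 0 = 0 := by
  simpa using C.toSL.map_zero

lemma flip (a b : E) : ⟪C.toFun a, b⟫_ℂ = ⟪C.toFun b, a⟫_ℂ := by
  conv_lhs => rw [← C.invol b]
  rw [C.inner_map]

lemma norm_map (x : E) : ‖C.toFun x‖ = ‖x‖ := by
  have h2 : (‖C.toFun x‖ : ℝ)^2 = (‖x‖ : ℝ)^2 := by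
    rw [← @inner_self_eq_norm_sq ℂ, ← @inner_self_eq_norm_sq ℂ, C.inner_map]
  nlinarith [norm_nonneg (C.toFun x), norm_nonneg x]

lemma continuous : Continuous C.toFun := by
  have : Isometry C.toFun := AddMonoidHomClass.isometry_of_norm C.toSL C.norm_map
  exact this.continuous

end Conjugation
lemma e_apply (n k : ℕ) : (e n : ∀ _ : ℕ, ℂ) k = if k = n then 1 else 0 := by
  simp [e, lp.single_apply, Pi.single_apply]

lemma inner_e_left (n : ℕ) (f : ℋ) : ⟪e n, f⟫_ℂ = f n := by
  simp [e, lp.inner_single_left]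

lemma lp2_ext {f g : ℋ} (h : ∀ n, (f : ∀ _ : ℕ, ℂ) n = g n) : f = g := lp.ext (funext h)

lemma memℓp_ite (c : ℂ) (n : ℕ) : Memℓp (fun k => if k = n then c else 0) 2 := by
  have := lp.memℓp (lp.single 2 n c : ℋ)
  convert this using 1
  funext k
  rw [lp.single_apply, Pi.single_apply]

lemma smul_e (c : ℂ) (n : ℕ) : c • e n = lp.single 2 n c := by
  rw [e, ← lp.single_smul]
  norm_num

set_option linter.unusedSectionVars false
namespace Stmt16

variable {lam : ℕ → ℂ} {W : lp (fun _ : ℕ => ℂ) 2 →ₗ.[ℂ] lp (fun _ : ℕ => ℂ) 2}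
  {C : Conjugation ℋ}
  (hW : IsWeightedShift lam W)
  (hsym : ∀ x : W.domain, ∃ hx : C.toFun x ∈ W.adjoint.domain,
    C.toFun (W.adjoint ⟨C.toFun x, hx⟩) = W x)
  (hdom : ∀ n : ℕ, C.toFun (e n) ∈ W.domain)

section Wbasic
include hW

lemma heW (n : ℕ) : e n ∈ W.domain := by
  rw [hW.1]
  have : (fun k => lam k * (e n : ∀ _ : ℕ, ℂ) k) = fun k => if k = n then lam n else 0 := by
    funext k
    rw [e_apply]
    split_ifs with h
    · subst h; ring
    · ring
  rw [this]
  exact memℓp_ite (lam n) n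

lemma hWe (n : ℕ) (h : e n ∈ W.domain) : (W ⟨e n, h⟩ : ℋ) = lam n • e (n+1) := by
  apply lp2_ext
  intro k
  match k with
  | 0 =>
    rw [(hW.2 ⟨e n, h⟩).1]
    have : ((lam n • e (n+1) : ℋ) : ∀ _ : ℕ, ℂ) 0 = lam n * (e (n+1) : ∀ _ : ℕ, ℂ) 0 := rfl
    rw [this, e_apply]
    simp
  | j + 1 =>
    rw [(hW.2 ⟨e n, h⟩).2 j]
    have : ((lam n • e (n+1) : ℋ) : ∀ _ : ℕ, ℂ) (j+1) = lam n * (e (n+1) : ∀ _ : ℕ, ℂ) (j+1) := rfl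
    rw [this, e_apply, e_apply]
    by_cases hj : j = n
    · subst hj; simp
    · rw [if_neg hj, if_neg (by omega)]
      ring

/-- dense domain -/
lemma hTrmem (f : ℋ) (N : ℕ) : (∑ i ∈ Finset.range N, lp.single 2 i (f i) : ℋ) ∈ W.domain := by
  apply Submodule.sum_mem
  intro i _
  rw [← smul_e]
  exact Submodule.smul_mem _ _ (heW hW i)

lemma hTrtend (f : ℋ) :
    Filter.Tendsto (fun N => ∑ i ∈ Finset.range N, lp.single 2 i (f i) : ℕ → ℋ)
      Filter.atTop (nhds f) :=
  (lp.hasSum_single (by norm_num) f).tendsto_sum_nat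

lemma hdense : Dense (W.domain : Set ℋ) := by
  intro f
  apply mem_closure_of_tendsto (hTrtend hW f)
  exact Filter.Eventually.of_forall fun N => hTrmem hW f N

end Wbasic

end Stmt16
namespace Stmt16
section Adj
variable {lam : ℕ → ℂ} {W : lp (fun _ : ℕ => ℂ) 2 →ₗ.[ℂ] lp (fun _ : ℕ => ℂ) 2}
  {C : Conjugation ℋ}
  (hW : IsWeightedShift lam W)
  (hsym : ∀ x : W.domain, ∃ hx : C.toFun x ∈ W.adjoint.domain,
    C.toFun (W.adjoint ⟨C.toFun x, hx⟩) = W x)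
  (hdom : ∀ n : ℕ, C.toFun (e n) ∈ W.domain)

include hW

lemma hWadj (y : W.adjoint.domain) (x : W.domain) :
    ⟪(W.adjoint y : ℋ), (x : ℋ)⟫_ℂ = ⟪(y : ℋ), (W x : ℋ)⟫_ℂ :=
  LinearPMap.adjoint_isFormalAdjoint (hdense hW) y x

lemma he0adj : ∃ h : e 0 ∈ W.adjoint.domain, W.adjoint ⟨e 0, h⟩ = 0 := by
  have hmem : e 0 ∈ W.adjoint.domain := by
    apply LinearPMap.mem_adjoint_domain_of_exists
    refine ⟨0, fun x => ?_⟩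
    rw [inner_zero_left, inner_e_left, (hW.2 x).1]
  refine ⟨hmem, ?_⟩
  apply LinearPMap.adjoint_apply_eq (hdense hW)
  intro x
  rw [inner_zero_left, inner_e_left, (hW.2 x).1]

lemma headj (n : ℕ) : ∃ h : e (n+1) ∈ W.adjoint.domain,
    W.adjoint ⟨e (n+1), h⟩ = conj (lam n) • e n := by
  have key : ∀ x : W.domain, ⟪conj (lam n) • e n, (x : ℋ)⟫_ℂ = ⟪e (n+1), (W x : ℋ)⟫_ℂ := by
    intro x
    rw [inner_smul_left, inner_e_left, inner_e_left, (hW.2 x).2 n]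
    simp
  have hmem : e (n+1) ∈ W.adjoint.domain :=
    LinearPMap.mem_adjoint_domain_of_exists _ ⟨conj (lam n) • e n, key⟩
  exact ⟨hmem, LinearPMap.adjoint_apply_eq (hdense hW) _ key⟩

include hsym

lemma hCeWadj (x : W.domain) : C.toFun (x : ℋ) ∈ W.adjoint.domain := (hsym x).1

lemma hWstar (x : W.domain) (h : C.toFun (x : ℋ) ∈ W.adjoint.domain) :
    W.adjoint ⟨C.toFun (x : ℋ), h⟩ = C.toFun (W x : ℋ) := by
  obtain ⟨hx, hv⟩ := hsym x
  have : C.toFun (C.toFun (W.adjoint ⟨C.toFun (x : ℋ), hx⟩)) = C.toFun (W x) :=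
    congrArg C.toFun hv
  rw [C.invol] at this
  exact this

include hdom

lemma hWCe0 (h : C.toFun (e 0) ∈ W.domain) : (W ⟨C.toFun (e 0), h⟩ : ℋ) = 0 := by
  obtain ⟨hx, hv⟩ := hsym ⟨C.toFun (e 0), h⟩
  obtain ⟨h0, h0v⟩ := he0adj hW
  have hco : (⟨C.toFun ((⟨C.toFun (e 0), h⟩ : W.domain) : ℋ), hx⟩ : W.adjoint.domain)
      = ⟨e 0, h0⟩ := Subtype.ext (C.invol _)
  rw [hco, h0v, C.map_zero] at hv
  exact hv.symm

lemma hWCe (n : ℕ) (h : C.toFun (e (n+1)) ∈ W.domain) :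
    (W ⟨C.toFun (e (n+1)), h⟩ : ℋ) = lam n • C.toFun (e n) := by
  obtain ⟨hx, hv⟩ := hsym ⟨C.toFun (e (n+1)), h⟩
  obtain ⟨h1, h1v⟩ := headj hW n
  have hco : (⟨C.toFun ((⟨C.toFun (e (n+1)), h⟩ : W.domain) : ℋ), hx⟩ : W.adjoint.domain)
      = ⟨e (n+1), h1⟩ := Subtype.ext (C.invol _)
  rw [hco, h1v] at hv
  rw [C.map_smul', Complex.conj_conj] at hv
  exact hv.symm

lemma hWsCe (n : ℕ) (h : C.toFun (e n) ∈ W.adjoint.domain) :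
    W.adjoint ⟨C.toFun (e n), h⟩ = conj (lam n) • C.toFun (e (n+1)) := by
  have := hWstar hW hsym ⟨e n, heW hW n⟩ h
  rw [this, hWe hW n (heW hW n), C.map_smul']

end Adj
end Stmt16
namespace Stmt16

noncomputable def MM (R : ℋ →ₗ.[ℂ] ℋ) : Submodule ℂ ℋ :=
  (LinearMap.range R.toFun).topologicalClosure

noncomputable instance (R : ℋ →ₗ.[ℂ] ℋ) : CompleteSpace (MM R) :=
  (Submodule.isClosed_topologicalClosure _).completeSpace_coe

section MU
variable {R : ℋ →ₗ.[ℂ] ℋ} {U : ℋ →L[ℂ] ℋ}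
  (hUiso : ∀ x ∈ (LinearMap.range R.toFun).topologicalClosure, ‖U x‖ = ‖x‖)
  (hUker : ∀ x ∈ ((LinearMap.range R.toFun).topologicalClosure : Submodule ℂ ℋ)ᗮ, U x = 0)

lemma hRanM (y : R.domain) : (R y : ℋ) ∈ MM R :=
  Submodule.le_topologicalClosure _ (LinearMap.mem_range_self R.toFun y)

include hUiso in
lemma hUinner (a b : ℋ) (ha : a ∈ MM R) (hb : b ∈ MM R) : ⟪U a, U b⟫_ℂ = ⟪a, b⟫_ℂ := by
  let f : MM R →ₗᵢ[ℂ] ℋ := ⟨U.toLinearMap.comp (MM R).subtype, fun x => hUiso x x.2⟩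
  exact f.inner_map_map ⟨a, ha⟩ ⟨b, hb⟩

include hUker in
lemma hUP (x : ℋ) : U x = U ((MM R).orthogonalProjectionOnto x) := by
  have h0 := hUker _ (Submodule.sub_starProjection_mem_orthogonal (K := MM R) x)
  have : U x - U ((MM R).orthogonalProjectionOnto x) = 0 := by
    rw [← map_sub]; exact h0
  exact sub_eq_zero.mp this

include hUker in
lemma hUsM (z : ℋ) : ContinuousLinearMap.adjoint U z ∈ MM R := by
  rw [← Submodule.orthogonal_orthogonal (MM R)]
  intro u hu
  rw [ContinuousLinearMap.adjoint_inner_right, hUker u hu, inner_zero_left]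

include hUiso hUker in
lemma hUsU (v : ℋ) (hv : v ∈ MM R) : ContinuousLinearMap.adjoint U (U v) = v := by
  apply ext_inner_right ℂ
  intro w
  rw [ContinuousLinearMap.adjoint_inner_left]
  rw [hUP hUker w, hUinner hUiso v _ hv ((MM R).orthogonalProjectionOnto w).2]
  have hw : w - ((MM R).orthogonalProjectionOnto w : ℋ) ∈ (MM R)ᗮ :=
    Submodule.sub_starProjection_mem_orthogonal w
  have := Submodule.inner_right_of_mem_orthogonal hv hw
  rw [inner_sub_right] at this
  linear_combination -this

lemma hperpM (x : ℋ) (h : ∀ y : R.domain, ⟪(R y : ℋ), x⟫_ℂ = 0) : x ∈ (MM R)ᗮ := by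
  rw [Submodule.mem_orthogonal]
  intro u hu
  have hcl : (MM R : Set ℋ) = closure (LinearMap.range R.toFun : Set ℋ) :=
    Submodule.topologicalClosure_coe _
  have hu' : u ∈ closure (LinearMap.range R.toFun : Set ℋ) := by rw [← hcl]; exact hu
  have hClosed : IsClosed {u : ℋ | ⟪u, x⟫_ℂ = 0} :=
    isClosed_eq (continuous_id.inner continuous_const) continuous_const
  refine hClosed.closure_subset_iff.mpr ?_ hu'
  rintro _ ⟨y, rfl⟩
  exact h y

lemma hMperp0 (x : ℋ) (h1 : x ∈ MM R) (h2 : x ∈ (MM R)ᗮ) : x = 0 := by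
  have := Submodule.inner_right_of_mem_orthogonal h1 h2
  rwa [inner_self_eq_zero] at this

end MU
end Stmt16
namespace Stmt16
section RW
variable {lam : ℕ → ℂ} {W : lp (fun _ : ℕ => ℂ) 2 →ₗ.[ℂ] lp (fun _ : ℕ => ℂ) 2}
  {C : Conjugation ℋ} {R : ℋ →ₗ.[ℂ] ℋ} {U : ℋ →L[ℂ] ℋ}
  (hW : IsWeightedShift lam W)
  (hsym : ∀ x : W.domain, ∃ hx : C.toFun x ∈ W.adjoint.domain,
    C.toFun (W.adjoint ⟨C.toFun x, hx⟩) = W x)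
  (hdom : ∀ n : ℕ, C.toFun (e n) ∈ W.domain)
  (hRsa : R.adjoint = R)
  (hRpos : ∀ x : R.domain, 0 ≤ ((inner ℂ (x : ℋ) (R x) : ℂ)).re)
  (hUiso : ∀ x ∈ (LinearMap.range R.toFun).topologicalClosure, ‖U x‖ = ‖x‖)
  (hUker : ∀ x ∈ ((LinearMap.range R.toFun).topologicalClosure :
      Submodule ℂ ℋ)ᗮ, U x = 0)
  (hdomWR : W.domain = R.domain)
  (hWUR : ∀ (x : W.domain) (hx : (x : ℋ) ∈ R.domain),
      (W x : ℋ) = U (R ⟨x, hx⟩))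

include hW hdomWR

lemma hdenseR : Dense ((R.domain : Submodule ℂ ℋ) : Set ℋ) := by
  rw [← hdomWR]; exact hdense hW

lemma hmemWR {v : ℋ} : v ∈ W.domain ↔ v ∈ R.domain := by rw [hdomWR]

include hRsa

lemma hRadj (x y : R.domain) : ⟪(R x : ℋ), (y : ℋ)⟫_ℂ = ⟪(x : ℋ), (R y : ℋ)⟫_ℂ := by
  have h := LinearPMap.adjoint_isFormalAdjoint (hdenseR hW hdomWR)
  rw [hRsa] at h
  exact h x y

lemma hRval (v : ℋ) (h : v ∈ R.domain) (z : ℋ)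
    (hz : ∀ y : R.domain, ⟪z, (y : ℋ)⟫_ℂ = ⟪v, (R y : ℋ)⟫_ℂ) : (R ⟨v, h⟩ : ℋ) = z := by
  apply (hdenseR hW hdomWR).eq_of_inner_left ℂ
  intro y hy
  rw [hRadj hW hRsa hdomWR ⟨v, h⟩ ⟨y, hy⟩, ← hz ⟨y, hy⟩]

lemma hRmemOf (v z : ℋ)
    (hz : ∀ y : R.domain, ⟪z, (y : ℋ)⟫_ℂ = ⟪v, (R y : ℋ)⟫_ℂ) : v ∈ R.domain := by
  have : v ∈ R.adjoint.domain := LinearPMap.mem_adjoint_domain_of_exists v ⟨z, hz⟩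
  rwa [hRsa] at this

lemma hMperpDom (z : ℋ) (hz : z ∈ (MM R)ᗮ) : ∃ h : z ∈ R.domain, (R ⟨z, h⟩ : ℋ) = 0 := by
  have hz0 : ∀ y : R.domain, ⟪(0 : ℋ), (y : ℋ)⟫_ℂ = ⟪z, (R y : ℋ)⟫_ℂ := by
    intro y
    rw [inner_zero_left]
    have := Submodule.inner_right_of_mem_orthogonal (hRanM y) hz
    rw [← inner_conj_symm, this, map_zero]
  exact ⟨hRmemOf hW hRsa hdomWR z 0 hz0, hRval hW hRsa hdomWR z _ 0 hz0⟩

include hWUR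

lemma hWUR' (v : ℋ) (hw : v ∈ W.domain) (hr : v ∈ R.domain) :
    (W ⟨v, hw⟩ : ℋ) = U (R ⟨v, hr⟩) := hWUR ⟨v, hw⟩ hr

include hUiso

lemma hnormRW (v : ℋ) (hw : v ∈ W.domain) (hr : v ∈ R.domain) :
    ‖(R ⟨v, hr⟩ : ℋ)‖ = ‖(W ⟨v, hw⟩ : ℋ)‖ := by
  rw [hWUR' hW hRsa hdomWR hWUR v hw hr]
  exact (hUiso _ (hRanM _)).symm

lemma hF1 (v w : ℋ) (hwv : v ∈ W.domain) (hrv : v ∈ R.domain)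
    (hww : w ∈ W.domain) (hrw : w ∈ R.domain) :
    ⟪(R ⟨v, hrv⟩ : ℋ), (R ⟨w, hrw⟩ : ℋ)⟫_ℂ = ⟪(W ⟨v, hwv⟩ : ℋ), (W ⟨w, hww⟩ : ℋ)⟫_ℂ := by
  rw [hWUR' hW hRsa hdomWR hWUR v hwv hrv, hWUR' hW hRsa hdomWR hWUR w hww hrw]
  exact (hUinner hUiso _ _ (hRanM _) (hRanM _)).symm

lemma hWsRUs (v : ℋ) (h : v ∈ W.adjoint.domain) :
    ∃ h2 : (ContinuousLinearMap.adjoint U) v ∈ R.domain,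
      (R ⟨(ContinuousLinearMap.adjoint U) v, h2⟩ : ℋ) = W.adjoint ⟨v, h⟩ := by
  have hz : ∀ y : R.domain, ⟪(W.adjoint ⟨v, h⟩ : ℋ), (y : ℋ)⟫_ℂ
      = ⟪(ContinuousLinearMap.adjoint U) v, (R y : ℋ)⟫_ℂ := by
    intro y
    rw [ContinuousLinearMap.adjoint_inner_left]
    have hyW : (y : ℋ) ∈ W.domain := (hmemWR hW hdomWR).mpr y.2
    rw [← hWUR' hW hRsa hdomWR hWUR y hyW y.2]
    exact hWadj hW ⟨v, h⟩ ⟨y, hyW⟩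
  exact ⟨hRmemOf hW hRsa hdomWR _ _ hz, hRval hW hRsa hdomWR _ _ _ hz⟩

end RW
end Stmt16
namespace Stmt16
section Eigen
variable {lam : ℕ → ℂ} {W : lp (fun _ : ℕ => ℂ) 2 →ₗ.[ℂ] lp (fun _ : ℕ => ℂ) 2}
  {C : Conjugation ℋ} {R : ℋ →ₗ.[ℂ] ℋ} {U : ℋ →L[ℂ] ℋ}
  (hW : IsWeightedShift lam W)
  (hsym : ∀ x : W.domain, ∃ hx : C.toFun x ∈ W.adjoint.domain,
    C.toFun (W.adjoint ⟨C.toFun x, hx⟩) = W x)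
  (hdom : ∀ n : ℕ, C.toFun (e n) ∈ W.domain)
  (hRsa : R.adjoint = R)
  (hRpos : ∀ x : R.domain, 0 ≤ ((inner ℂ (x : ℋ) (R x) : ℂ)).re)
  (hUiso : ∀ x ∈ (LinearMap.range R.toFun).topologicalClosure, ‖U x‖ = ‖x‖)
  (hUker : ∀ x ∈ ((LinearMap.range R.toFun).topologicalClosure :
      Submodule ℂ ℋ)ᗮ, U x = 0)
  (hdomWR : W.domain = R.domain)
  (hWUR : ∀ (x : W.domain) (hx : (x : ℋ) ∈ R.domain),
      (W x : ℋ) = U (R ⟨x, hx⟩))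

include hW hsym hdom hRsa hUiso hdomWR hWUR

lemma hRCe0 : ∃ h0 : C.toFun (e 0) ∈ R.domain, (R ⟨C.toFun (e 0), h0⟩ : ℋ) = 0 := by
  have hw := hdom 0
  have hr := (hmemWR hW hdomWR).mp hw
  refine ⟨hr, ?_⟩
  have h1 : ‖(R ⟨C.toFun (e 0), hr⟩ : ℋ)‖ = 0 := by
    rw [hnormRW hW hRsa hUiso hdomWR hWUR _ hw hr, hWCe0 hW hsym hdom hw]
    simp
  simpa [norm_eq_zero] using h1

lemma hRgm (n : ℕ) : ∃ hg : (ContinuousLinearMap.adjoint U) (C.toFun (e n)) ∈ R.domain,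
    (R ⟨(ContinuousLinearMap.adjoint U) (C.toFun (e n)), hg⟩ : ℋ)
      = conj (lam n) • C.toFun (e (n+1)) := by
  have hCe : C.toFun (e n) ∈ W.adjoint.domain := hCeWadj hW hsym ⟨e n, heW hW n⟩
  obtain ⟨h2, hval⟩ := hWsRUs hW hRsa hUiso hdomWR hWUR (C.toFun (e n)) hCe
  rw [hWsCe hW hsym hdom n hCe] at hval
  exact ⟨h2, hval⟩

include hUker hRpos

set_option maxHeartbeats 1000000 in
lemma hRCeEigen (n : ℕ) : ∃ h : C.toFun (e (n+1)) ∈ R.domain,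
    (R ⟨C.toFun (e (n+1)), h⟩ : ℋ) = ((‖lam n‖ : ℂ)) • C.toFun (e (n+1)) := by
  have hw := hdom (n+1)
  have hr := (hmemWR hW hdomWR).mp hw
  obtain ⟨hg, hgval⟩ := hRgm hW hsym hdom hRsa hUiso hdomWR hWUR n
  set gv : ℋ := (ContinuousLinearMap.adjoint U) (C.toFun (e n)) with hgv
  have h1 : (R ⟨C.toFun (e (n+1)), hr⟩ : ℋ) = lam n • gv := by
    have hM : (R ⟨C.toFun (e (n+1)), hr⟩ : ℋ) ∈ MM R := hRanM _
    have h2 := hUsU hUiso hUker _ hM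
    rw [← h2, ← hWUR' hW hRsa hdomWR hWUR _ hw hr, hWCe hW hsym hdom n hw, map_smul]
  refine ⟨hr, ?_⟩
  by_cases hz : lam n = 0
  · rw [h1, hz]
    simp
  · have hgd : lam n • gv ∈ R.domain := Submodule.smul_mem _ _ hg
    have h2 : (R ⟨lam n • gv, hgd⟩ : ℋ) = ((‖lam n‖^2 : ℝ) : ℂ) • C.toFun (e (n+1)) := by
      have e2 : (⟨lam n • gv, hgd⟩ : R.domain) = lam n • ⟨gv, hg⟩ := Subtype.ext rfl
      rw [e2, LinearPMap.map_smul]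
      have : ((R ⟨gv, hg⟩ : ℋ)) = conj (lam n) • C.toFun (e (n+1)) := hgval
      rw [this, smul_smul]
      congr 1
      rw [Complex.mul_conj]
      norm_cast
      rw [Complex.sq_norm]
    set a : ℝ := ‖lam n‖ with ha
    have hapos : 0 < a := by rw [ha]; exact norm_pos_iff.mpr hz
    set v : ℋ := (R ⟨C.toFun (e (n+1)), hr⟩ : ℋ) - (a : ℂ) • C.toFun (e (n+1)) with hv
    have hvd : v ∈ R.domain := by
      rw [hv, h1]
      exact Submodule.sub_mem _ hgd (Submodule.smul_mem _ _ hr)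
    have hsplit : (⟨v, hvd⟩ : R.domain) = ⟨lam n • gv, hgd⟩ - (a : ℂ) • ⟨C.toFun (e (n+1)), hr⟩ := by
      apply Subtype.ext
      show v = lam n • gv - (a : ℂ) • C.toFun (e (n+1))
      rw [hv, h1]
    have hRv : (R ⟨v, hvd⟩ : ℋ) = (-(a : ℂ)) • v := by
      rw [hsplit, LinearPMap.map_sub, LinearPMap.map_smul, h2]
      rw [hv, h1]
      have hnc : ((‖lam n‖^2 : ℝ) : ℂ) = (a:ℂ) * (a:ℂ) := by
        rw [ha]; push_cast; ring
      rw [hnc]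
      module
    have hp0 := hRpos ⟨v, hvd⟩
    have hp : 0 ≤ (⟪v, (R ⟨v, hvd⟩ : ℋ)⟫_ℂ).re := hp0
    rw [hRv] at hp
    have hinner : (⟪v, (-(a : ℂ)) • v⟫_ℂ) = ((-(a * ‖v‖^2) : ℝ) : ℂ) := by
      rw [inner_smul_right, inner_self_eq_norm_sq_to_K]
      push_cast
      ring_nf
      rfl
    rw [hinner, Complex.ofReal_re] at hp
    have hv0 : v = 0 := by
      have : ‖v‖^2 ≤ 0 := by nlinarith
      have : ‖v‖ = 0 := by nlinarith [norm_nonneg v, sq_nonneg ‖v‖]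
      exact norm_eq_zero.mp this
    rw [hv] at hv0
    exact sub_eq_zero.mp hv0
end Eigen
end Stmt16
namespace Stmt16

noncomputable def Ak (lam : ℕ → ℂ) : ℕ → ℝ
  | 0 => 0
  | (k+1) => ‖lam k‖

section Eigen2
variable {lam : ℕ → ℂ} {W : lp (fun _ : ℕ => ℂ) 2 →ₗ.[ℂ] lp (fun _ : ℕ => ℂ) 2}
  {C : Conjugation ℋ} {R : ℋ →ₗ.[ℂ] ℋ} {U : ℋ →L[ℂ] ℋ}
  (hW : IsWeightedShift lam W)
  (hsym : ∀ x : W.domain, ∃ hx : C.toFun x ∈ W.adjoint.domain,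
    C.toFun (W.adjoint ⟨C.toFun x, hx⟩) = W x)
  (hdom : ∀ n : ℕ, C.toFun (e n) ∈ W.domain)
  (hRsa : R.adjoint = R)
  (hRpos : ∀ x : R.domain, 0 ≤ ((inner ℂ (x : ℋ) (R x) : ℂ)).re)
  (hUiso : ∀ x ∈ (LinearMap.range R.toFun).topologicalClosure, ‖U x‖ = ‖x‖)
  (hUker : ∀ x ∈ ((LinearMap.range R.toFun).topologicalClosure :
      Submodule ℂ ℋ)ᗮ, U x = 0)
  (hdomWR : W.domain = R.domain)
  (hWUR : ∀ (x : W.domain) (hx : (x : ℋ) ∈ R.domain),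
      (W x : ℋ) = U (R ⟨x, hx⟩))

lemma hCcoord {C : Conjugation ℋ} (w : ℋ) (j : ℕ) :
    (C.toFun w : ∀ _ : ℕ, ℂ) j = conj ⟪C.toFun (e j), w⟫_ℂ := by
  rw [← inner_e_left j (C.toFun w), ← inner_conj_symm, C.flip]

lemma htotal {C : Conjugation ℋ} (v : ℋ) (h : ∀ k, ⟪C.toFun (e k), v⟫_ℂ = 0) : v = 0 := by
  have hCv : C.toFun v = 0 := by
    apply lp2_ext
    intro k
    rw [hCcoord, h k]
    simp
  have := congrArg C.toFun hCv
  rwa [C.invol, C.map_zero] at this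

include hW hdomWR in
lemma heR (n : ℕ) : e n ∈ R.domain := (hmemWR hW hdomWR).mp (heW hW n)

include hW hsym hdom in
lemma hstar (n m : ℕ) :
    lam n * ⟪C.toFun (e (n+1)), e m⟫_ℂ = lam m * ⟪C.toFun (e n), e (m+1)⟫_ℂ := by
  have hCe : C.toFun (e n) ∈ W.adjoint.domain := hCeWadj hW hsym ⟨e n, heW hW n⟩
  have h1 := hWadj hW ⟨C.toFun (e n), hCe⟩ ⟨e m, heW hW m⟩
  rw [hWsCe hW hsym hdom n hCe, hWe hW m (heW hW m)] at h1
  rw [inner_smul_left, inner_smul_right, Complex.conj_conj] at h1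
  exact h1

include hW hsym hdom hRsa hRpos hUiso hUker hdomWR hWUR

lemma hRCeAll (k : ℕ) : ∃ h : C.toFun (e k) ∈ R.domain,
    (R ⟨C.toFun (e k), h⟩ : ℋ) = ((Ak lam k : ℝ) : ℂ) • C.toFun (e k) := by
  match k with
  | 0 =>
    obtain ⟨h, hv⟩ := hRCe0 hW hsym hdom hRsa hUiso hdomWR hWUR
    exact ⟨h, by rw [hv, Ak]; simp⟩
  | (k+1) =>
    obtain ⟨h, hv⟩ := hRCeEigen hW hsym hdom hRsa hRpos hUiso hUker hdomWR hWUR k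
    exact ⟨h, by rw [hv, Ak]⟩

lemma hkey (y : ℋ) (hyw : y ∈ W.domain) (hyr : y ∈ R.domain) (n : ℕ) :
    ⟪(R ⟨y, hyr⟩ : ℋ), (R ⟨e n, heR hW hdomWR n⟩ : ℋ)⟫_ℂ
      = ((‖lam n‖^2 : ℝ) : ℂ) * ⟪y, e n⟫_ℂ := by
  rw [hF1 hW hRsa hUiso hdomWR hWUR y (e n) hyw hyr (heW hW n) (heR hW hdomWR n)]
  rw [hWe hW n (heW hW n), inner_smul_right]
  rw [← inner_conj_symm ((W ⟨y, hyw⟩ : ℋ)) (e (n+1))]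
  rw [inner_e_left, (hW.2 ⟨y, hyw⟩).2 n]
  rw [← inner_conj_symm y (e n), inner_e_left]
  have hcc : lam n * (starRingEnd ℂ) (lam n) = ((‖lam n‖^2 : ℝ) : ℂ) := by
    rw [Complex.mul_conj]
    norm_cast
    rw [Complex.sq_norm]
  rw [map_mul, ← mul_assoc, hcc]

lemma hck (k n : ℕ) :
    ((Ak lam k : ℝ) : ℂ) * ⟪C.toFun (e k), e n⟫_ℂ
      = ((‖lam n‖ : ℝ) : ℂ) * ⟪C.toFun (e k), e n⟫_ℂ := by
  obtain ⟨hk, hkv⟩ := hRCeAll hW hsym hdom hRsa hRpos hUiso hUker hdomWR hWUR k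
  have hQ1 : ⟪(R ⟨C.toFun (e k), hk⟩ : ℋ), (R ⟨e n, heR hW hdomWR n⟩ : ℋ)⟫_ℂ
      = ((Ak lam k : ℝ) : ℂ)^2 * ⟪C.toFun (e k), e n⟫_ℂ := by
    conv_lhs => rw [hkv]
    rw [inner_smul_left, ← hRadj hW hRsa hdomWR ⟨C.toFun (e k), hk⟩ ⟨e n, heR hW hdomWR n⟩]
    conv_lhs => rw [hkv]
    rw [inner_smul_left, Complex.conj_ofReal]
    ring
  have hQ2 := hkey hW hsym hdom hRsa hRpos hUiso hUker hdomWR hWUR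
    (C.toFun (e k)) (hdom k) hk n
  rw [hQ1] at hQ2
  by_cases hd : ⟪C.toFun (e k), e n⟫_ℂ = 0
  · rw [hd]; ring
  · have h2 : (((Ak lam k : ℝ) : ℂ)^2 - ((‖lam n‖^2 : ℝ) : ℂ)) * ⟪C.toFun (e k), e n⟫_ℂ = 0 := by
      rw [sub_mul, hQ2]; ring
    rcases mul_eq_zero.mp h2 with h | h
    · have h3 : (Ak lam k)^2 = ‖lam n‖^2 := by
        have := sub_eq_zero.mp h
        exact_mod_cast this
      have h4 : 0 ≤ Ak lam k := by
        match k with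
        | 0 => simp [Ak]
        | (j+1) => simp [Ak]
      have h5 : Ak lam k = ‖lam n‖ := by nlinarith [norm_nonneg (lam n)]
      rw [h5]
    · exact absurd h hd

lemma hRe (n : ℕ) : (R ⟨e n, heR hW hdomWR n⟩ : ℋ) = ((‖lam n‖ : ℝ) : ℂ) • e n := by
  have key : ∀ k, ⟪C.toFun (e k), (R ⟨e n, heR hW hdomWR n⟩ : ℋ) - ((‖lam n‖ : ℝ) : ℂ) • e n⟫_ℂ
      = 0 := by
    intro k
    obtain ⟨hk, hkv⟩ := hRCeAll hW hsym hdom hRsa hRpos hUiso hUker hdomWR hWUR k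
    rw [inner_sub_right, inner_smul_right]
    rw [← hRadj hW hRsa hdomWR ⟨C.toFun (e k), hk⟩ ⟨e n, heR hW hdomWR n⟩]
    rw [hkv, inner_smul_left, Complex.conj_ofReal]
    have := hck hW hsym hdom hRsa hRpos hUiso hUker hdomWR hWUR k n
    rw [this]
    ring
  have := htotal ((R ⟨e n, heR hW hdomWR n⟩ : ℋ) - ((‖lam n‖ : ℝ) : ℂ) • e n) key
  exact sub_eq_zero.mp this

lemma hkernel (m n : ℕ) :
    lam m * ((‖lam n‖ : ℝ) : ℂ) * ⟪C.toFun (e (m+1)), e n⟫_ℂ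
      = lam n * ((‖lam m‖ : ℝ) : ℂ) * ⟪C.toFun (e (n+1)), e m⟫_ℂ := by
  have h1 : ((‖lam n‖ : ℝ) : ℂ) * ⟪C.toFun (e (m+1)), e n⟫_ℂ
      = ((‖lam m‖ : ℝ) : ℂ) * ⟪C.toFun (e (m+1)), e n⟫_ℂ :=
    (hck hW hsym hdom hRsa hRpos hUiso hUker hdomWR hWUR (m+1) n).symm
  have h2 : lam m * ⟪C.toFun (e (m+1)), e n⟫_ℂ = lam n * ⟪C.toFun (e (n+1)), e m⟫_ℂ := by
    rw [C.flip (e (m+1)) (e n)]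
    exact (hstar hW hsym hdom n m).symm
  calc lam m * ((‖lam n‖ : ℝ) : ℂ) * ⟪C.toFun (e (m+1)), e n⟫_ℂ
      = ((‖lam n‖ : ℝ) : ℂ) * (lam m * ⟪C.toFun (e (m+1)), e n⟫_ℂ) := by ring
    _ = ((‖lam n‖ : ℝ) : ℂ) * (lam n * ⟪C.toFun (e (n+1)), e m⟫_ℂ) := by rw [h2]
    _ = lam n * (((‖lam n‖ : ℝ) : ℂ) * ⟪C.toFun (e (n+1)), e m⟫_ℂ) := by ring
    _ = lam n * (((‖lam m‖ : ℝ) : ℂ) * ⟪C.toFun (e (n+1)), e m⟫_ℂ) := by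
        have h3 : ((‖lam n‖ : ℝ) : ℂ) * ⟪C.toFun (e (n+1)), e m⟫_ℂ
            = ((‖lam m‖ : ℝ) : ℂ) * ⟪C.toFun (e (n+1)), e m⟫_ℂ :=
          hck hW hsym hdom hRsa hRpos hUiso hUker hdomWR hWUR (n+1) m
        rw [h3]
    _ = lam n * ((‖lam m‖ : ℝ) : ℂ) * ⟪C.toFun (e (n+1)), e m⟫_ℂ := by ring

end Eigen2
end Stmt16
namespace Stmt16
section Trunc
variable {lam : ℕ → ℂ} {W : lp (fun _ : ℕ => ℂ) 2 →ₗ.[ℂ] lp (fun _ : ℕ => ℂ) 2}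
  {C : Conjugation ℋ} {R : ℋ →ₗ.[ℂ] ℋ} {U : ℋ →L[ℂ] ℋ}
  (hW : IsWeightedShift lam W)
  (hsym : ∀ x : W.domain, ∃ hx : C.toFun x ∈ W.adjoint.domain,
    C.toFun (W.adjoint ⟨C.toFun x, hx⟩) = W x)
  (hdom : ∀ n : ℕ, C.toFun (e n) ∈ W.domain)
  (hRsa : R.adjoint = R)
  (hRpos : ∀ x : R.domain, 0 ≤ ((inner ℂ (x : ℋ) (R x) : ℂ)).re)
  (hUiso : ∀ x ∈ (LinearMap.range R.toFun).topologicalClosure, ‖U x‖ = ‖x‖)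
  (hUker : ∀ x ∈ ((LinearMap.range R.toFun).topologicalClosure :
      Submodule ℂ ℋ)ᗮ, U x = 0)
  (hdomWR : W.domain = R.domain)
  (hWUR : ∀ (x : W.domain) (hx : (x : ℋ) ∈ R.domain),
      (W x : ℋ) = U (R ⟨x, hx⟩))

lemma hdouble {C' : Conjugation ℋ} (N : ℕ) (a b : ℕ → ℂ) :
    ⟪C'.toFun (∑ i ∈ Finset.range N, a i • e (i+1)), ∑ j ∈ Finset.range N, b j • e j⟫_ℂ
      = ∑ i ∈ Finset.range N, ∑ j ∈ Finset.range N,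
          a i * b j * ⟪C'.toFun (e (i+1)), e j⟫_ℂ := by
  rw [show C'.toFun (∑ i ∈ Finset.range N, a i • e (i+1))
      = C'.toSL (∑ i ∈ Finset.range N, a i • e (i+1)) from rfl]
  rw [map_sum, sum_inner]
  apply Finset.sum_congr rfl
  intro i _
  rw [inner_sum]
  apply Finset.sum_congr rfl
  intro j _
  rw [LinearMap.map_smulₛₗ, inner_smul_left, inner_smul_right, Complex.conj_conj]
  rw [Conjugation.toSL_apply]
  ring


include hW

lemma hTrsub (f : ℋ) (N : ℕ) :
    (⟨∑ i ∈ Finset.range N, lp.single 2 i (f i), hTrmem hW f N⟩ : W.domain)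
      = ∑ i ∈ Finset.range N, (f i) • (⟨e i, heW hW i⟩ : W.domain) := by
  apply Subtype.ext
  push_cast
  apply Finset.sum_congr rfl
  intro i _
  exact (smul_e (f i) i).symm

lemma hWTr (f : ℋ) (N : ℕ) :
    (W ⟨∑ i ∈ Finset.range N, lp.single 2 i (f i), hTrmem hW f N⟩ : ℋ)
      = ∑ i ∈ Finset.range N, (lam i * f i) • e (i+1) := by
  rw [hTrsub hW f N]
  rw [show (W (∑ i ∈ Finset.range N, (f i) • (⟨e i, heW hW i⟩ : W.domain)) : ℋ)
      = W.toFun (∑ i ∈ Finset.range N, (f i) • (⟨e i, heW hW i⟩ : W.domain)) from rfl]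
  rw [map_sum]
  apply Finset.sum_congr rfl
  intro i _
  rw [show W.toFun ((f i) • (⟨e i, heW hW i⟩ : W.domain)) = (W ((f i) • (⟨e i, heW hW i⟩ : W.domain)) : ℋ) from rfl]
  rw [LinearPMap.map_smul, hWe hW i (heW hW i), smul_smul, mul_comm]

lemma hWhasSum (f : ℋ) (hf : f ∈ W.domain) :
    HasSum (fun i => (lam i * f i) • e (i+1)) ((W ⟨f, hf⟩ : ℋ)) := by
  have h0 := lp.hasSum_single (E := fun _ : ℕ => ℂ) (p := 2) (by norm_num) (W ⟨f, hf⟩ : ℋ)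
  have hz : lp.single (E := fun _ : ℕ => ℂ) 2 0 ((W ⟨f, hf⟩ : ℋ) 0) = 0 := by
    rw [(hW.2 ⟨f, hf⟩).1]
    apply lp2_ext
    intro k
    rw [lp.single_apply, Pi.single_apply]
    split_ifs <;> simp
  have h1 : HasSum (fun n => lp.single (E := fun _ : ℕ => ℂ) 2 (n+1) ((W ⟨f, hf⟩ : ℋ) (n+1)))
      ((W ⟨f, hf⟩ : ℋ)) := by
    rw [hasSum_nat_add_iff (f := fun i => lp.single (E := fun _ : ℕ => ℂ) 2 i ((W ⟨f, hf⟩ : ℋ) i)) 1]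
    simpa [hz] using h0
  have heq : (fun n => lp.single (E := fun _ : ℕ => ℂ) 2 (n+1) ((W ⟨f, hf⟩ : ℋ) (n+1)))
      = fun n => (lam n * f n) • e (n+1) := by
    funext n
    rw [(hW.2 ⟨f, hf⟩).2 n, smul_e]
  rwa [heq] at h1

lemma hWTrtend (f : ℋ) (hf : f ∈ W.domain) :
    Filter.Tendsto (fun N => (W ⟨∑ i ∈ Finset.range N, lp.single 2 i (f i), hTrmem hW f N⟩ : ℋ))
      Filter.atTop (nhds (W ⟨f, hf⟩ : ℋ)) := by
  have := (hWhasSum hW f hf).tendsto_sum_nat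
  apply this.congr
  intro N
  exact (hWTr hW f N).symm

include hsym hdom hRsa hRpos hUiso hUker hdomWR hWUR

lemma hTrmemR (f : ℋ) (N : ℕ) :
    (∑ i ∈ Finset.range N, lp.single 2 i (f i) : ℋ) ∈ R.domain :=
  (hmemWR hW hdomWR).mp (hTrmem hW f N)

lemma hRTr (f : ℋ) (N : ℕ) :
    (R ⟨∑ i ∈ Finset.range N, lp.single 2 i (f i), hTrmemR hW hsym hdom hRsa hRpos hUiso hUker hdomWR hWUR f N⟩ : ℋ)
      = ∑ i ∈ Finset.range N, (((‖lam i‖ : ℝ) : ℂ) * f i) • e i := by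
  have hsub : (⟨∑ i ∈ Finset.range N, lp.single 2 i (f i), hTrmemR hW hsym hdom hRsa hRpos hUiso hUker hdomWR hWUR f N⟩ : R.domain)
      = ∑ i ∈ Finset.range N, (f i) • (⟨e i, heR hW hdomWR i⟩ : R.domain) := by
    apply Subtype.ext
    push_cast
    apply Finset.sum_congr rfl
    intro i _
    exact (smul_e (f i) i).symm
  rw [hsub]
  rw [show (R (∑ i ∈ Finset.range N, (f i) • (⟨e i, heR hW hdomWR i⟩ : R.domain)) : ℋ)
      = R.toFun (∑ i ∈ Finset.range N, (f i) • (⟨e i, heR hW hdomWR i⟩ : R.domain)) from rfl]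
  rw [map_sum]
  apply Finset.sum_congr rfl
  intro i _
  rw [show R.toFun ((f i) • (⟨e i, heR hW hdomWR i⟩ : R.domain))
      = (R ((f i) • (⟨e i, heR hW hdomWR i⟩ : R.domain)) : ℋ) from rfl]
  rw [LinearPMap.map_smul, hRe hW hsym hdom hRsa hRpos hUiso hUker hdomWR hWUR i,
    smul_smul, mul_comm]

lemma hRTrtend (f : ℋ) (hf : f ∈ W.domain) (hfr : f ∈ R.domain) :
    Filter.Tendsto (fun N => (R ⟨∑ i ∈ Finset.range N, lp.single 2 i (f i),
        hTrmemR hW hsym hdom hRsa hRpos hUiso hUker hdomWR hWUR f N⟩ : ℋ))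
      Filter.atTop (nhds (R ⟨f, hfr⟩ : ℋ)) := by
  rw [tendsto_iff_norm_sub_tendsto_zero]
  have hnorm : ∀ N, ‖(R ⟨∑ i ∈ Finset.range N, lp.single 2 i (f i),
        hTrmemR hW hsym hdom hRsa hRpos hUiso hUker hdomWR hWUR f N⟩ : ℋ) - (R ⟨f, hfr⟩ : ℋ)‖
      = ‖(W ⟨∑ i ∈ Finset.range N, lp.single 2 i (f i), hTrmem hW f N⟩ : ℋ) - (W ⟨f, hf⟩ : ℋ)‖ := by
    intro N
    rw [← LinearPMap.map_sub, ← LinearPMap.map_sub]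
    exact hnormRW hW hRsa hUiso hdomWR hWUR _ _ _
  have hW0 : Filter.Tendsto (fun N => ‖(W ⟨∑ i ∈ Finset.range N, lp.single 2 i (f i),
      hTrmem hW f N⟩ : ℋ) - (W ⟨f, hf⟩ : ℋ)‖) Filter.atTop (nhds 0) := by
    have := (hWTrtend hW f hf)
    rw [tendsto_iff_norm_sub_tendsto_zero] at this
    exact this
  apply hW0.congr
  intro N
  exact (hnorm N).symm

lemma hSsymFin (f g : ℋ) (N : ℕ) :
    ⟪C.toFun (W ⟨∑ i ∈ Finset.range N, lp.single 2 i (f i), hTrmem hW f N⟩ : ℋ),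
      (R ⟨∑ i ∈ Finset.range N, lp.single 2 i (g i),
        hTrmemR hW hsym hdom hRsa hRpos hUiso hUker hdomWR hWUR g N⟩ : ℋ)⟫_ℂ
    = ⟪C.toFun (W ⟨∑ i ∈ Finset.range N, lp.single 2 i (g i), hTrmem hW g N⟩ : ℋ),
      (R ⟨∑ i ∈ Finset.range N, lp.single 2 i (f i),
        hTrmemR hW hsym hdom hRsa hRpos hUiso hUker hdomWR hWUR f N⟩ : ℋ)⟫_ℂ := by
  rw [hWTr hW f N, hWTr hW g N,
    hRTr hW hsym hdom hRsa hRpos hUiso hUker hdomWR hWUR f N,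
    hRTr hW hsym hdom hRsa hRpos hUiso hUker hdomWR hWUR g N]
  rw [hdouble N (fun i => lam i * f i) (fun j => ((‖lam j‖ : ℝ) : ℂ) * g j)]
  rw [hdouble N (fun i => lam i * g i) (fun j => ((‖lam j‖ : ℝ) : ℂ) * f j)]
  rw [Finset.sum_comm]
  apply Finset.sum_congr rfl
  intro j _
  apply Finset.sum_congr rfl
  intro i _
  have hk := hkernel hW hsym hdom hRsa hRpos hUiso hUker hdomWR hWUR i j
  linear_combination (f i * g j) * hk

lemma hSsym (f g : ℋ) (hf : f ∈ W.domain) (hfr : f ∈ R.domain)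
    (hg : g ∈ W.domain) (hgr : g ∈ R.domain) :
    ⟪C.toFun (W ⟨f, hf⟩ : ℋ), (R ⟨g, hgr⟩ : ℋ)⟫_ℂ
      = ⟪C.toFun (W ⟨g, hg⟩ : ℋ), (R ⟨f, hfr⟩ : ℋ)⟫_ℂ := by
  have hL : Filter.Tendsto (fun N =>
      ⟪C.toFun (W ⟨∑ i ∈ Finset.range N, lp.single 2 i (f i), hTrmem hW f N⟩ : ℋ),
        (R ⟨∑ i ∈ Finset.range N, lp.single 2 i (g i),
          hTrmemR hW hsym hdom hRsa hRpos hUiso hUker hdomWR hWUR g N⟩ : ℋ)⟫_ℂ)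
      Filter.atTop (nhds (⟪C.toFun (W ⟨f, hf⟩ : ℋ), (R ⟨g, hgr⟩ : ℋ)⟫_ℂ)) := by
    apply Filter.Tendsto.inner
    · exact (C.continuous.tendsto _).comp (hWTrtend hW f hf)
    · exact hRTrtend hW hsym hdom hRsa hRpos hUiso hUker hdomWR hWUR g hg hgr
  have hR2 : Filter.Tendsto (fun N =>
      ⟪C.toFun (W ⟨∑ i ∈ Finset.range N, lp.single 2 i (g i), hTrmem hW g N⟩ : ℋ),
        (R ⟨∑ i ∈ Finset.range N, lp.single 2 i (f i),
          hTrmemR hW hsym hdom hRsa hRpos hUiso hUker hdomWR hWUR f N⟩ : ℋ)⟫_ℂ)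
      Filter.atTop (nhds (⟪C.toFun (W ⟨g, hg⟩ : ℋ), (R ⟨f, hfr⟩ : ℋ)⟫_ℂ)) := by
    apply Filter.Tendsto.inner
    · exact (C.continuous.tendsto _).comp (hWTrtend hW g hg)
    · exact hRTrtend hW hsym hdom hRsa hRpos hUiso hUker hdomWR hWUR f hf hfr
  have hEq : (fun N =>
      ⟪C.toFun (W ⟨∑ i ∈ Finset.range N, lp.single 2 i (f i), hTrmem hW f N⟩ : ℋ),
        (R ⟨∑ i ∈ Finset.range N, lp.single 2 i (g i),
          hTrmemR hW hsym hdom hRsa hRpos hUiso hUker hdomWR hWUR g N⟩ : ℋ)⟫_ℂ)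
      = (fun N =>
      ⟪C.toFun (W ⟨∑ i ∈ Finset.range N, lp.single 2 i (g i), hTrmem hW g N⟩ : ℋ),
        (R ⟨∑ i ∈ Finset.range N, lp.single 2 i (f i),
          hTrmemR hW hsym hdom hRsa hRpos hUiso hUker hdomWR hWUR f N⟩ : ℋ)⟫_ℂ) := by
    funext N
    exact hSsymFin hW hsym hdom hRsa hRpos hUiso hUker hdomWR hWUR f g N
  rw [hEq] at hL
  exact tendsto_nhds_unique hL hR2

end Trunc
end Stmt16
namespace Stmt16

lemma single_zero' (j : ℕ) : (lp.single 2 j (0:ℂ) : ℋ) = 0 := by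
  apply lp2_ext
  intro k
  rw [lp.single_apply, Pi.single_apply]
  split_ifs <;> simp

section Core
variable {lam : ℕ → ℂ} {W : lp (fun _ : ℕ => ℂ) 2 →ₗ.[ℂ] lp (fun _ : ℕ => ℂ) 2}
  {C : Conjugation ℋ} {R : ℋ →ₗ.[ℂ] ℋ} {U : ℋ →L[ℂ] ℋ}
  (hW : IsWeightedShift lam W)
  (hsym : ∀ x : W.domain, ∃ hx : C.toFun x ∈ W.adjoint.domain,
    C.toFun (W.adjoint ⟨C.toFun x, hx⟩) = W x)
  (hdom : ∀ n : ℕ, C.toFun (e n) ∈ W.domain)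
  (hRsa : R.adjoint = R)
  (hRpos : ∀ x : R.domain, 0 ≤ ((inner ℂ (x : ℋ) (R x) : ℂ)).re)
  (hUiso : ∀ x ∈ (LinearMap.range R.toFun).topologicalClosure, ‖U x‖ = ‖x‖)
  (hUker : ∀ x ∈ ((LinearMap.range R.toFun).topologicalClosure :
      Submodule ℂ ℋ)ᗮ, U x = 0)
  (hdomWR : W.domain = R.domain)
  (hWUR : ∀ (x : W.domain) (hx : (x : ℋ) ∈ R.domain),
      (W x : ℋ) = U (R ⟨x, hx⟩))

include hW hsym hdom hRsa hRpos hUiso hUker hdomWR hWUR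

lemma hUsWy (y : ℋ) (hyw : y ∈ W.domain) (hyr : y ∈ R.domain) :
    ContinuousLinearMap.adjoint U (W ⟨y, hyw⟩ : ℋ) = (R ⟨y, hyr⟩ : ℋ) := by
  rw [hWUR' hW hRsa hdomWR hWUR y hyw hyr]
  exact hUsU hUiso hUker _ (hRanM _)

lemma hCRcoord (v : ℋ) (hv : v ∈ R.domain) (j : ℕ) :
    (C.toFun (R ⟨v, hv⟩ : ℋ) : ∀ _ : ℕ, ℂ) j
      = conj (((Ak lam j : ℝ) : ℂ) * ⟪C.toFun (e j), v⟫_ℂ) := by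
  rw [hCcoord]
  congr 1
  obtain ⟨hk, hkv⟩ := hRCeAll hW hsym hdom hRsa hRpos hUiso hUker hdomWR hWUR j
  rw [← hRadj hW hRsa hdomWR ⟨C.toFun (e j), hk⟩ ⟨v, hv⟩, hkv, inner_smul_left,
    Complex.conj_ofReal]

lemma hCRWmem (v : ℋ) (hv : v ∈ R.domain) :
    C.toFun (R ⟨v, hv⟩ : ℋ) ∈ (LinearMap.range W.toFun).topologicalClosure := by
  set w := C.toFun (R ⟨v, hv⟩ : ℋ) with hwdef
  have hts := (lp.hasSum_single (E := fun _ : ℕ => ℂ) (p := 2) (by norm_num) w).tendsto_sum_nat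
  have hmemset : w ∈ ((LinearMap.range W.toFun).topologicalClosure : Set ℋ) := by
    rw [Submodule.topologicalClosure_coe]
    apply mem_closure_of_tendsto hts
    apply Filter.Eventually.of_forall
    intro N
    apply Submodule.sum_mem
    intro j _
    match j with
    | 0 =>
      have hw0 : (w : ∀ _ : ℕ, ℂ) 0 = 0 := by
        rw [hwdef, hCRcoord hW hsym hdom hRsa hRpos hUiso hUker hdomWR hWUR v hv 0]
        simp [Ak]
      rw [hw0, single_zero']
      exact Submodule.zero_mem _
    | (i+1) =>
      by_cases hz : lam i = 0
      · have hwi : (w : ∀ _ : ℕ, ℂ) (i+1) = 0 := by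
          rw [hwdef, hCRcoord hW hsym hdom hRsa hRpos hUiso hUker hdomWR hWUR v hv (i+1)]
          have : Ak lam (i+1) = 0 := by rw [show Ak lam (i+1) = ‖lam i‖ from rfl, hz]; simp
          rw [this]
          simp
        rw [hwi, single_zero']
        exact Submodule.zero_mem _
      · have : lp.single 2 (i+1) ((w : ∀ _ : ℕ, ℂ) (i+1))
            = W.toFun (((w : ∀ _ : ℕ, ℂ) (i+1) / lam i) • (⟨e i, heW hW i⟩ : W.domain)) := by
          rw [show W.toFun (((w : ∀ _ : ℕ, ℂ) (i+1) / lam i) • (⟨e i, heW hW i⟩ : W.domain))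
              = (W (((w : ∀ _ : ℕ, ℂ) (i+1) / lam i) • (⟨e i, heW hW i⟩ : W.domain)) : ℋ) from rfl]
          rw [LinearPMap.map_smul, hWe hW i (heW hW i), smul_smul, div_mul_cancel₀ _ hz, smul_e]
        rw [this]
        exact LinearMap.mem_range_self _ _
  exact hmemset

lemma hG4'' (v : ℋ) (hv : v ∈ W.domain) (hr : v ∈ R.domain) :
    U (C.toFun (W ⟨v, hv⟩ : ℋ)) = C.toFun (R ⟨v, hr⟩ : ℋ) := by
  set δ := U (C.toFun (W ⟨v, hv⟩ : ℋ)) - C.toFun (R ⟨v, hr⟩ : ℋ) with hδ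
  have hδperp : ∀ y : W.domain, ⟪δ, (W y : ℋ)⟫_ℂ = 0 := by
    intro y
    have hyr : (y : ℋ) ∈ R.domain := (hmemWR hW hdomWR).mp y.2
    have hy2 : (⟨(y : ℋ), y.2⟩ : W.domain) = y := rfl
    rw [hδ, inner_sub_left]
    have t1 : ⟪U (C.toFun (W ⟨v, hv⟩ : ℋ)), (W y : ℋ)⟫_ℂ
        = ⟪C.toFun (W ⟨v, hv⟩ : ℋ), (R ⟨(y : ℋ), hyr⟩ : ℋ)⟫_ℂ := by
      rw [← ContinuousLinearMap.adjoint_inner_right U]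
      congr 1
      exact hUsWy hW hsym hdom hRsa hRpos hUiso hUker hdomWR hWUR (y : ℋ) y.2 hyr
    have t2 : ⟪C.toFun (R ⟨v, hr⟩ : ℋ), (W y : ℋ)⟫_ℂ
        = ⟪C.toFun (W ⟨(y : ℋ), y.2⟩ : ℋ), (R ⟨v, hr⟩ : ℋ)⟫_ℂ := by
      rw [C.flip]
    rw [t1, t2]
    rw [hSsym hW hsym hdom hRsa hRpos hUiso hUker hdomWR hWUR v (y : ℋ) hv hr y.2 hyr]
    rw [hy2]
    ring
  have hUsδ : ContinuousLinearMap.adjoint U δ = 0 := by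
    apply hMperp0 _ (hUsM hUker δ)
    apply hperpM
    intro y
    rw [ContinuousLinearMap.adjoint_inner_right]
    have hyw : (y : ℋ) ∈ W.domain := (hmemWR hW hdomWR).mpr y.2
    have : U (R y : ℋ) = (W ⟨(y : ℋ), hyw⟩ : ℋ) := by
      rw [hWUR' hW hRsa hdomWR hWUR (y : ℋ) hyw y.2]
    rw [this]
    rw [← inner_conj_symm, hδperp ⟨(y : ℋ), hyw⟩, map_zero]
  have h1 : ⟪U (C.toFun (W ⟨v, hv⟩ : ℋ)), δ⟫_ℂ = 0 := by
    rw [← ContinuousLinearMap.adjoint_inner_right U, hUsδ, inner_zero_right]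
  have h2 : ⟪C.toFun (R ⟨v, hr⟩ : ℋ), δ⟫_ℂ = 0 := by
    rw [← inner_conj_symm]
    have hper : ∀ w ∈ ((LinearMap.range W.toFun).topologicalClosure : Set ℋ),
        ⟪δ, w⟫_ℂ = 0 := by
      intro w hw
      rw [Submodule.topologicalClosure_coe] at hw
      have hClosed : IsClosed {u : ℋ | ⟪δ, u⟫_ℂ = 0} :=
        isClosed_eq (continuous_const.inner continuous_id) continuous_const
      refine hClosed.closure_subset_iff.mpr ?_ hw
      rintro _ ⟨y, rfl⟩
      exact hδperp y
    rw [hper _ (hCRWmem hW hsym hdom hRsa hRpos hUiso hUker hdomWR hWUR v hr), map_zero]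
  have hzero : ⟪δ, δ⟫_ℂ = 0 := by
    rw [hδ, inner_sub_left] at *
    rw [h1, h2]
    ring
  have := inner_self_eq_zero.mp hzero
  rw [hδ] at this
  exact sub_eq_zero.mp this

end Core
end Stmt16
namespace Stmt16
section Core2
variable {lam : ℕ → ℂ} {W : lp (fun _ : ℕ => ℂ) 2 →ₗ.[ℂ] lp (fun _ : ℕ => ℂ) 2}
  {C : Conjugation ℋ} {R : ℋ →ₗ.[ℂ] ℋ} {U : ℋ →L[ℂ] ℋ}
  (hW : IsWeightedShift lam W)
  (hsym : ∀ x : W.domain, ∃ hx : C.toFun x ∈ W.adjoint.domain,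
    C.toFun (W.adjoint ⟨C.toFun x, hx⟩) = W x)
  (hdom : ∀ n : ℕ, C.toFun (e n) ∈ W.domain)
  (hRsa : R.adjoint = R)
  (hRpos : ∀ x : R.domain, 0 ≤ ((inner ℂ (x : ℋ) (R x) : ℂ)).re)
  (hUiso : ∀ x ∈ (LinearMap.range R.toFun).topologicalClosure, ‖U x‖ = ‖x‖)
  (hUker : ∀ x ∈ ((LinearMap.range R.toFun).topologicalClosure :
      Submodule ℂ ℋ)ᗮ, U x = 0)
  (hdomWR : W.domain = R.domain)
  (hWUR : ∀ (x : W.domain) (hx : (x : ℋ) ∈ R.domain),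
      (W x : ℋ) = U (R ⟨x, hx⟩))

include hW hsym hdom hRsa hRpos hUiso hUker hdomWR hWUR

lemma hCWinRanR (y : ℋ) (hyw : y ∈ W.domain) :
    ∃ h : ContinuousLinearMap.adjoint U (C.toFun y) ∈ R.domain,
      (R ⟨ContinuousLinearMap.adjoint U (C.toFun y), h⟩ : ℋ)
        = C.toFun (W ⟨y, hyw⟩ : ℋ) := by
  have hCy : C.toFun y ∈ W.adjoint.domain := hCeWadj hW hsym ⟨y, hyw⟩
  obtain ⟨h2, hval⟩ := hWsRUs hW hRsa hUiso hdomWR hWUR (C.toFun y) hCy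
  rw [hWstar hW hsym ⟨y, hyw⟩ hCy] at hval
  exact ⟨h2, hval⟩

lemma hG7' (v : ℋ) (hvw : v ∈ W.domain) (hvr : v ∈ R.domain) :
    ContinuousLinearMap.adjoint U (C.toFun (R ⟨v, hvr⟩ : ℋ)) = C.toFun (W ⟨v, hvw⟩ : ℋ) := by
  obtain ⟨hud, hval⟩ := hCWinRanR hW hsym hdom hRsa hRpos hUiso hUker hdomWR hWUR v hvw
  have hδM : ContinuousLinearMap.adjoint U (C.toFun (R ⟨v, hvr⟩ : ℋ))
      - C.toFun (W ⟨v, hvw⟩ : ℋ) ∈ MM R := by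
    apply Submodule.sub_mem
    · exact hUsM hUker _
    · rw [← hval]
      exact hRanM _
  have hδperp : ContinuousLinearMap.adjoint U (C.toFun (R ⟨v, hvr⟩ : ℋ))
      - C.toFun (W ⟨v, hvw⟩ : ℋ) ∈ (MM R)ᗮ := by
    apply hperpM
    intro y
    have hyw : (y : ℋ) ∈ W.domain := (hmemWR hW hdomWR).mpr y.2
    rw [inner_sub_right]
    have t1 : ⟪(R y : ℋ), ContinuousLinearMap.adjoint U (C.toFun (R ⟨v, hvr⟩ : ℋ))⟫_ℂ
        = conj ⟪C.toFun (W ⟨(y : ℋ), hyw⟩ : ℋ), (R ⟨v, hvr⟩ : ℋ)⟫_ℂ := by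
      rw [ContinuousLinearMap.adjoint_inner_right]
      rw [show U (R y : ℋ) = (W ⟨(y : ℋ), hyw⟩ : ℋ) from
        (hWUR' hW hRsa hdomWR hWUR (y : ℋ) hyw y.2).symm]
      rw [← inner_conj_symm, C.flip]
    have t2 : ⟪(R y : ℋ), C.toFun (W ⟨v, hvw⟩ : ℋ)⟫_ℂ
        = conj ⟪C.toFun (W ⟨v, hvw⟩ : ℋ), (R y : ℋ)⟫_ℂ := by
      rw [inner_conj_symm]
    rw [t1, t2]
    have hy2 : (⟨(y : ℋ), y.2⟩ : R.domain) = y := rfl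
    have := hSsym hW hsym hdom hRsa hRpos hUiso hUker hdomWR hWUR
      (y : ℋ) v hyw y.2 hvw hvr
    rw [hy2] at this
    rw [this]
    ring
  have := hMperp0 _ hδM hδperp
  exact sub_eq_zero.mp this

lemma hG7a (v : ℋ) (hvw : v ∈ W.domain) (hvr : v ∈ R.domain) :
    ∃ h : C.toFun (U v) ∈ R.domain,
      (R ⟨C.toFun (U v), h⟩ : ℋ) = C.toFun (W ⟨v, hvw⟩ : ℋ) := by
  obtain ⟨hud, hval⟩ := hCWinRanR hW hsym hdom hRsa hRpos hUiso hUker hdomWR hWUR v hvw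
  have hkperp : C.toFun (U v) - ContinuousLinearMap.adjoint U (C.toFun v) ∈ (MM R)ᗮ := by
    apply hperpM
    intro y
    have hyw : (y : ℋ) ∈ W.domain := (hmemWR hW hdomWR).mpr y.2
    have hy2 : (⟨(y : ℋ), y.2⟩ : R.domain) = y := rfl
    rw [inner_sub_right]
    have t1 : ⟪(R y : ℋ), C.toFun (U v)⟫_ℂ
        = conj ⟪C.toFun (W ⟨(y : ℋ), hyw⟩ : ℋ), v⟫_ℂ := by
      rw [← inner_conj_symm, C.flip]
      congr 1
      rw [← hG7' hW hsym hdom hRsa hRpos hUiso hUker hdomWR hWUR (y : ℋ) hyw y.2]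
      rw [ContinuousLinearMap.adjoint_inner_left]
    have t2 : ⟪(R y : ℋ), ContinuousLinearMap.adjoint U (C.toFun v)⟫_ℂ
        = conj ⟪C.toFun (W ⟨(y : ℋ), hyw⟩ : ℋ), v⟫_ℂ := by
      rw [ContinuousLinearMap.adjoint_inner_right]
      rw [show U (R y : ℋ) = (W ⟨(y : ℋ), hyw⟩ : ℋ) from
        (hWUR' hW hRsa hdomWR hWUR (y : ℋ) hyw y.2).symm]
      rw [← inner_conj_symm, C.flip]
    rw [t1, t2]
    ring
  obtain ⟨hkd, hk0⟩ := hMperpDom hW hRsa hdomWR _ hkperp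
  have hsum : C.toFun (U v) = ContinuousLinearMap.adjoint U (C.toFun v)
      + (C.toFun (U v) - ContinuousLinearMap.adjoint U (C.toFun v)) := by abel
  have hmem : C.toFun (U v) ∈ R.domain := by
    rw [hsum]
    exact Submodule.add_mem _ hud hkd
  refine ⟨hmem, ?_⟩
  have hsplit : (⟨C.toFun (U v), hmem⟩ : R.domain)
      = ⟨ContinuousLinearMap.adjoint U (C.toFun v), hud⟩
        + ⟨C.toFun (U v) - ContinuousLinearMap.adjoint U (C.toFun v), hkd⟩ := by
    apply Subtype.ext
    push_cast
    abel
  rw [hsplit, LinearPMap.map_add, hval, hk0, add_zero]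

lemma hG4 (x : ℋ) (hx : x ∈ MM R) : C.toFun (U (C.toFun (U x))) = x := by
  have hcont : Continuous (fun z : ℋ => C.toFun (U (C.toFun (U z)))) :=
    C.continuous.comp (U.continuous.comp (C.continuous.comp U.continuous))
  have heqon : Set.EqOn (fun z : ℋ => C.toFun (U (C.toFun (U z)))) id
      ((LinearMap.range R.toFun : Submodule ℂ ℋ) : Set ℋ) := by
    rintro _ ⟨y, rfl⟩
    have hyw : (y : ℋ) ∈ W.domain := (hmemWR hW hdomWR).mpr y.2
    have hy2 : (⟨(y : ℋ), y.2⟩ : R.domain) = y := rfl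
    show C.toFun (U (C.toFun (U (R.toFun y)))) = R.toFun y
    have h1 : U (R.toFun y) = (W ⟨(y : ℋ), hyw⟩ : ℋ) :=
      (hWUR' hW hRsa hdomWR hWUR (y : ℋ) hyw y.2).symm
    rw [h1]
    rw [hG4'' hW hsym hdom hRsa hRpos hUiso hUker hdomWR hWUR (y : ℋ) hyw y.2]
    rw [C.invol]
    rfl
  have hclo := heqon.closure hcont continuous_id
  have hx' : x ∈ closure ((LinearMap.range R.toFun : Submodule ℂ ℋ) : Set ℋ) := by
    rw [← Submodule.topologicalClosure_coe]
    exact hx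
  exact hclo hx'

end Core2
end Stmt16

/-- if a unilateral weighted shift `W_λ` is `C`-symmetric with
`C eₙ ∈ dom W_λ` for all `n`, and `W_λ = U |W_λ|` is its polar decomposition
(`R = |W_λ|` is the positive selfadjoint factor and `U` the partial isometry with
initial space the closure of `ran |W_λ|`), then there is an antilinear partial
conjugation `J` with `U = C J` and `J |W_λ| = |W_λ| J`. -/
theorem stmt_16 (lam : ℕ → ℂ)
    (W : lp (fun _ : ℕ => ℂ) 2 →ₗ.[ℂ] lp (fun _ : ℕ => ℂ) 2)
    (hW : IsWeightedShift lam W)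
    (C : Conjugation (lp (fun _ : ℕ => ℂ) 2)) (hsym : CSymmetric C W)
    (hdom : ∀ n : ℕ, C.toFun (e n) ∈ W.domain)
    (R : lp (fun _ : ℕ => ℂ) 2 →ₗ.[ℂ] lp (fun _ : ℕ => ℂ) 2)
    (U : lp (fun _ : ℕ => ℂ) 2 →L[ℂ] lp (fun _ : ℕ => ℂ) 2)
    -- `R` plays the role of `|W_λ|`: a positive selfadjoint operator
    (hRsa : R.adjoint = R)
    (hRpos : ∀ x : R.domain, 0 ≤ ((inner ℂ (x : lp (fun _ : ℕ => ℂ) 2) (R x) : ℂ)).re)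
    -- `U` is a partial isometry with initial space `closure (ran R)`
    (hUiso : ∀ x ∈ (LinearMap.range R.toFun).topologicalClosure, ‖U x‖ = ‖x‖)
    (hUker : ∀ x ∈ ((LinearMap.range R.toFun).topologicalClosure :
      Submodule ℂ (lp (fun _ : ℕ => ℂ) 2))ᗮ, U x = 0)
    -- `W = U R`, including equality of domains
    (hdomWR : W.domain = R.domain)
    (hWUR : ∀ (x : W.domain) (hx : (x : lp (fun _ : ℕ => ℂ) 2) ∈ R.domain),
      (W x : lp (fun _ : ℕ => ℂ) 2) = U (R ⟨x, hx⟩)) :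
    ∃ J : lp (fun _ : ℕ => ℂ) 2 → lp (fun _ : ℕ => ℂ) 2,
      (∀ x y, J (x + y) = J x + J y) ∧
      (∀ (c : ℂ) x, J (c • x) = (starRingEnd ℂ c) • J x) ∧
      (∀ f ∈ (LinearMap.range R.toFun).topologicalClosure,
        ∀ g ∈ (LinearMap.range R.toFun).topologicalClosure,
          (inner ℂ (J f) (J g) : ℂ) = inner ℂ g f) ∧
      (∀ x ∈ ((LinearMap.range R.toFun).topologicalClosure :
        Submodule ℂ (lp (fun _ : ℕ => ℂ) 2))ᗮ, J x = 0) ∧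
      (∀ x ∈ (LinearMap.range R.toFun).topologicalClosure, J (J x) = x) ∧
      (∀ x ∈ ((LinearMap.range R.toFun).topologicalClosure :
        Submodule ℂ (lp (fun _ : ℕ => ℂ) 2))ᗮ, J (J x) = 0) ∧
      (∀ x, U x = C.toFun (J x)) ∧
      (∀ x, x ∈ R.domain ↔ J x ∈ R.domain) ∧
      (∀ (x : R.domain) (hx : J x ∈ R.domain), J (R x) = R ⟨J x, hx⟩) := by
    classical
  have hsym' : ∀ x : W.domain, ∃ hx : C.toFun x ∈ W.adjoint.domain,
      C.toFun (W.adjoint ⟨C.toFun x, hx⟩) = W x := hsym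
  refine ⟨fun x => C.toFun (U x), ?_, ?_, ?_, ?_, ?_, ?_, ?_, ?_, ?_⟩
  · intro x y
    show C.toFun (U (x + y)) = C.toFun (U x) + C.toFun (U y)
    rw [map_add, C.map_add']
  · intro c x
    show C.toFun (U (c • x)) = (starRingEnd ℂ) c • C.toFun (U x)
    rw [map_smul, C.map_smul']
  · intro f hf g hg
    rw [C.inner_map]
    exact Stmt16.hUinner hUiso g f hg hf
  · intro x hx
    show C.toFun (U x) = 0
    rw [hUker x hx, C.map_zero]
  · intro x hx
    exact Stmt16.hG4 hW hsym' hdom hRsa hRpos hUiso hUker hdomWR hWUR x hx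
  · intro x hx
    show C.toFun (U (C.toFun (U x))) = 0
    rw [hUker x hx, C.map_zero, map_zero, C.map_zero]
  · intro x
    show U x = C.toFun (C.toFun (U x))
    rw [C.invol]
  · intro x
    constructor
    · intro hx
      have hxw : x ∈ W.domain := (Stmt16.hmemWR hW hdomWR).mpr hx
      exact (Stmt16.hG7a hW hsym' hdom hRsa hRpos hUiso hUker hdomWR hWUR x hxw hx).1
    · intro hJx
      have hxp : x - ((Stmt16.MM R).orthogonalProjectionOnto x : lp (fun _ : ℕ => ℂ) 2)
          ∈ (Stmt16.MM R)ᗮ := Submodule.sub_starProjection_mem_orthogonal x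
      obtain ⟨hd1, -⟩ := Stmt16.hMperpDom hW hRsa hdomWR _ hxp
      have hUxp : U x = U ((Stmt16.MM R).orthogonalProjectionOnto x : lp (fun _ : ℕ => ℂ) 2) :=
        Stmt16.hUP hUker x
      have hw : C.toFun (U ((Stmt16.MM R).orthogonalProjectionOnto x : lp (fun _ : ℕ => ℂ) 2))
          ∈ R.domain := by
        rw [← hUxp]
        exact hJx
      have hww : C.toFun (U ((Stmt16.MM R).orthogonalProjectionOnto x : lp (fun _ : ℕ => ℂ) 2))
          ∈ W.domain := (Stmt16.hmemWR hW hdomWR).mpr hw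
      obtain ⟨hq, -⟩ := Stmt16.hG7a hW hsym' hdom hRsa hRpos hUiso hUker hdomWR hWUR _ hww hw
      have hpd : ((Stmt16.MM R).orthogonalProjectionOnto x : lp (fun _ : ℕ => ℂ) 2) ∈ R.domain := by
        rw [← Stmt16.hG4 hW hsym' hdom hRsa hRpos hUiso hUker hdomWR hWUR
          ((Stmt16.MM R).orthogonalProjectionOnto x : lp (fun _ : ℕ => ℂ) 2)
          ((Stmt16.MM R).orthogonalProjectionOnto x).2]
        exact hq
      have hxsum : x = (x - ((Stmt16.MM R).orthogonalProjectionOnto x : lp (fun _ : ℕ => ℂ) 2))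
          + ((Stmt16.MM R).orthogonalProjectionOnto x : lp (fun _ : ℕ => ℂ) 2) := by abel
      rw [hxsum]
      exact Submodule.add_mem _ hd1 hpd
  · intro x hx
    have hxw : (x : lp (fun _ : ℕ => ℂ) 2) ∈ W.domain := (Stmt16.hmemWR hW hdomWR).mpr x.2
    obtain ⟨hmem, hval⟩ := Stmt16.hG7a hW hsym' hdom hRsa hRpos hUiso hUker hdomWR hWUR
      (x : lp (fun _ : ℕ => ℂ) 2) hxw x.2
    have h1 : C.toFun (U (R x : lp (fun _ : ℕ => ℂ) 2))
        = C.toFun (W ⟨(x : lp (fun _ : ℕ => ℂ) 2), hxw⟩ : lp (fun _ : ℕ => ℂ) 2) := by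
      congr 1
      exact (Stmt16.hWUR' hW hRsa hdomWR hWUR (x : lp (fun _ : ℕ => ℂ) 2) hxw x.2).symm
    show C.toFun (U (R x : lp (fun _ : ℕ => ℂ) 2)) = (R ⟨C.toFun (U (x : lp (fun _ : ℕ => ℂ) 2)), hx⟩ : lp (fun _ : ℕ => ℂ) 2)
    rw [h1, ← hval]
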